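/- Let W_1, W_2, ... be i.i.d. standard Gaussian random variables, μ̂_s = (W_1 + ... + W_s)/s, and ε > 0. Define τ = min{t ≥ 1 : sup_{s ≥ t} |μ̂_s| < ε}. Then E[τ] ≤ 1 + 9/ε². -/

import Mathlib

set_option maxHeartbeats 1000000
open MeasureTheory ProbabilityTheory Real
open scoped ENNReal

section
variable {Ω : Type*} [MeasurableSpace Ω] (P : Measure Ω) [IsProbabilityMeasure P]
  (W : ℕ → Ω → ℝ) (hmeas : ∀ i, Measurable (W i))
  (hindep : iIndepFun W P)
  (hdist : ∀ i, Measure.map (W i) P = gaussianReal 0 1)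
  (ε : ℝ) (hε : 0 < ε)

lemma mgf_aux : ∫⁻ x, ENNReal.ofReal (rexp (ε * x - ε ^ 2 / 2)) ∂(gaussianReal 0 1) = 1 := by
  have hφ : Measurable fun x : ℝ => ENNReal.ofReal (rexp (ε * x - ε ^ 2 / 2)) :=
    (measurable_const.mul measurable_id).sub_const _ |>.exp.ennreal_ofReal
  rw [gaussianReal_of_var_ne_zero 0 one_ne_zero,
    lintegral_withDensity_eq_lintegral_mul _ (measurable_gaussianPDF 0 1) hφ]
  have hpt : ∀ x : ℝ, (gaussianPDF 0 1 * fun x => ENNReal.ofReal (rexp (ε * x - ε ^ 2 / 2))) x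
      = gaussianPDF ε 1 x := by
    intro x
    simp only [Pi.mul_apply, gaussianPDF, ← ENNReal.ofReal_mul (gaussianPDFReal_nonneg 0 1 x)]
    congr 1
    simp only [gaussianPDFReal, NNReal.coe_one, mul_one, sub_zero]
    rw [mul_assoc, ← Real.exp_add]
    congr 1
    ring
  simp_rw [hpt]
  exact lintegral_gaussianPDF_eq_one ε one_ne_zero

-- measurability of φ
lemma phi_meas : Measurable fun x : ℝ => ENNReal.ofReal (rexp (ε * x - ε ^ 2 / 2)) :=
  (measurable_const.mul measurable_id).sub_const _ |>.exp.ennreal_ofReal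

-- single integral
include hmeas hdist in
lemma single_int (i : ℕ) :
    ∫⁻ ω, ENNReal.ofReal (rexp (ε * W i ω - ε ^ 2 / 2)) ∂P = 1 := by
  have := lintegral_map (phi_meas ε) (hmeas i) (μ := P)
  rw [← this, hdist i, mgf_aux]

-- product over any finset integrates to 1
include hmeas hdist hindep in
lemma prod_int (T : Finset ℕ) :
    ∫⁻ ω, ∏ i ∈ T, ENNReal.ofReal (rexp (ε * W i ω - ε ^ 2 / 2)) ∂P = 1 := by
  classical
  induction T using Finset.induction_on with
  | empty => simp
  | @insert a T ha ih =>
    have hMle : ∀ i : ℕ, MeasurableSpace.comap (W i) inferInstance ≤ ‹MeasurableSpace Ω› :=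
      fun i => (hmeas i).comap_le
    have hdisj : Disjoint ({a} : Set ℕ) (↑T : Set ℕ) := by
      simpa [Set.disjoint_singleton_left] using ha
    have hind := indep_iSup_of_disjoint hMle hindep hdisj
    have hWmem : ∀ (A : Set ℕ), ∀ i ∈ A,
        Measurable[⨆ i ∈ A, MeasurableSpace.comap (W i) inferInstance] (W i) := by
      intro A i hi
      exact measurable_iff_comap_le.2
        (le_biSup (fun i => MeasurableSpace.comap (W i) inferInstance) hi)
    have hf : Measurable[⨆ i ∈ ({a} : Set ℕ), MeasurableSpace.comap (W i) inferInstance]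
        (fun ω => ENNReal.ofReal (rexp (ε * W a ω - ε ^ 2 / 2))) :=
      (phi_meas ε).comp (hWmem {a} a rfl)
    have hg : Measurable[⨆ i ∈ (↑T : Set ℕ), MeasurableSpace.comap (W i) inferInstance]
        (fun ω => ∏ i ∈ T, ENNReal.ofReal (rexp (ε * W i ω - ε ^ 2 / 2))) := by
      apply Finset.measurable_prod
      intro i hi
      exact (phi_meas ε).comp (hWmem (↑T) i hi)
    simp only [Finset.prod_insert ha]
    rw [lintegral_mul_eq_lintegral_mul_lintegral_of_independent_measurableSpace
      (iSup₂_le fun i _ => hMle i) (iSup₂_le fun i _ => hMle i) hind hf hg]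
    rw [single_int P W hmeas hdist ε a, ih, one_mul]

-- the maximal inequality
include hmeas hdist hindep hε in
lemma maximal (t : ℕ) :
    P {ω | ∃ s, t ≤ s ∧ ε * s ≤ ∑ i ∈ Finset.range s, W i ω}
      ≤ ENNReal.ofReal (rexp (-(ε ^ 2 * t) / 2)) := by
  classical
  set φ : ℕ → Ω → ℝ≥0∞ := fun i ω => ENNReal.ofReal (rexp (ε * W i ω - ε ^ 2 / 2)) with hφ
  set S : ℕ → Ω → ℝ := fun s ω => ∑ i ∈ Finset.range s, W i ω with hS
  have hprod : ∀ (s : ℕ) (ω : Ω), ∏ i ∈ Finset.range s, φ i ω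
      = ENNReal.ofReal (rexp (ε * S s ω - ε ^ 2 * s / 2)) := by
    intro s ω
    rw [hφ]
    rw [← ENNReal.ofReal_prod_of_nonneg (fun i _ => (Real.exp_pos _).le), ← Real.exp_sum]
    congr 1
    rw [Finset.sum_sub_distrib, ← Finset.mul_sum, Finset.sum_const, Finset.card_range,
      nsmul_eq_mul, hS]
    ring
  have hSmeas : ∀ s, Measurable (S s) := fun s => Finset.measurable_sum _ (fun i _ => hmeas i)
  set C : ℕ → Set Ω := fun s =>
    {ω | ε * s ≤ S s ω} ∩ ⋂ (s' : ℕ) (_ : t ≤ s') (_ : s' < s), {ω | S s' ω < ε * s'} with hC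
  have hCmeas : ∀ s, MeasurableSet (C s) := by
    intro s
    refine (measurableSet_le measurable_const (hSmeas s)).inter ?_
    exact MeasurableSet.iInter fun s' => MeasurableSet.iInter fun _ =>
      MeasurableSet.iInter fun _ => measurableSet_lt (hSmeas s') measurable_const
  have key : ∀ n : ℕ, P {ω | ∃ s, t ≤ s ∧ s ≤ n ∧ ε * s ≤ S s ω}
      ≤ ENNReal.ofReal (rexp (-(ε ^ 2 * t) / 2)) := by
    intro n
    have hsub : {ω | ∃ s, t ≤ s ∧ s ≤ n ∧ ε * s ≤ S s ω} ⊆ ⋃ s ∈ Finset.Icc t n, C s := by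
      intro ω hω
      have hex : ∃ s, t ≤ s ∧ s ≤ n ∧ ε * s ≤ S s ω := hω
      have hspec := Nat.find_spec hex
      refine Set.mem_biUnion (Finset.mem_Icc.2 ⟨hspec.1, hspec.2.1⟩) ?_
      refine ⟨hspec.2.2, ?_⟩
      simp only [Set.mem_iInter, Set.mem_setOf_eq]
      intro s' h1 h2
      by_contra hcon
      push_neg at hcon
      exact Nat.find_min hex h2 ⟨h1, le_trans (le_of_lt h2) hspec.2.1, hcon⟩
    have hterm : ∀ s ∈ Finset.Icc t n,
        ENNReal.ofReal (rexp (ε ^ 2 * t / 2)) * P (C s)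
          ≤ ∫⁻ ω, Set.indicator (C s) (fun _ => 1) ω * ∏ i ∈ Finset.range n, φ i ω ∂P := by
      intro s hs
      obtain ⟨hts, hsn⟩ := Finset.mem_Icc.1 hs
      have h1 : ENNReal.ofReal (rexp (ε ^ 2 * t / 2)) * P (C s)
          = ∫⁻ ω, Set.indicator (C s)
              (fun _ => ENNReal.ofReal (rexp (ε ^ 2 * t / 2))) ω ∂P := by
        rw [lintegral_indicator_const (hCmeas s)]
      have h2 : ∀ ω, Set.indicator (C s) (fun _ => ENNReal.ofReal (rexp (ε ^ 2 * t / 2))) ω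
          ≤ Set.indicator (C s) (fun _ => (1:ℝ≥0∞)) ω * ∏ i ∈ Finset.range s, φ i ω := by
        intro ω
        by_cases hω : ω ∈ C s
        · rw [Set.indicator_of_mem hω, Set.indicator_of_mem hω, one_mul, hprod s ω]
          apply ENNReal.ofReal_le_ofReal
          apply Real.exp_le_exp.2
          have h3 : ε * (ε * s) ≤ ε * S s ω := mul_le_mul_of_nonneg_left hω.1 hε.le
          have h4 : (t:ℝ) ≤ s := Nat.cast_le.2 hts
          have h5 : ε ^ 2 * (t:ℝ) ≤ ε ^ 2 * s := mul_le_mul_of_nonneg_left h4 (sq_nonneg ε)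
          nlinarith [h3, h5]
        · rw [Set.indicator_of_notMem hω, Set.indicator_of_notMem hω, zero_mul]
      have hMle : ∀ i : ℕ, MeasurableSpace.comap (W i) inferInstance ≤ ‹MeasurableSpace Ω› :=
        fun i => (hmeas i).comap_le
      have hMfle := iSup₂_le (fun i (_ : i ∈ {i : ℕ | i < s}) => hMle i)
      have hMgle := iSup₂_le (fun i (_ : i ∈ {i : ℕ | s ≤ i}) => hMle i)
      have hind : Indep (⨆ i ∈ {i : ℕ | i < s}, MeasurableSpace.comap (W i) inferInstance) (⨆ i ∈ {i : ℕ | s ≤ i}, MeasurableSpace.comap (W i) inferInstance) P := indep_iSup_of_disjoint hMle hindep (by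
        rw [Set.disjoint_left]
        intro i hi1 hi2
        simp only [Set.mem_setOf_eq] at hi1 hi2
        exact absurd hi2 (not_le.2 hi1))
      have hWf : ∀ i, i < s → Measurable[(⨆ i ∈ {i : ℕ | i < s}, MeasurableSpace.comap (W i) inferInstance)] (W i) := fun i hi =>
        measurable_iff_comap_le.2
          (le_biSup (fun i => MeasurableSpace.comap (W i) inferInstance) hi)
      have hSf : ∀ s', s' ≤ s → Measurable[(⨆ i ∈ {i : ℕ | i < s}, MeasurableSpace.comap (W i) inferInstance)] (S s') := by
        intro s' hs'
        apply Finset.measurable_sum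
        intro i hi
        exact hWf i (lt_of_lt_of_le (Finset.mem_range.1 hi) hs')
      have hCf : MeasurableSet[(⨆ i ∈ {i : ℕ | i < s}, MeasurableSpace.comap (W i) inferInstance)] (C s) := by
        refine MeasurableSet.inter ?_ ?_
        · exact measurableSet_le measurable_const (hSf s le_rfl)
        · exact MeasurableSet.iInter fun s' => MeasurableSet.iInter fun _ =>
            MeasurableSet.iInter fun hs' =>
              measurableSet_lt (hSf s' (le_of_lt hs')) measurable_const
      have hf : Measurable[(⨆ i ∈ {i : ℕ | i < s}, MeasurableSpace.comap (W i) inferInstance)] (fun ω =>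
          Set.indicator (C s) (fun _ => (1:ℝ≥0∞)) ω * ∏ i ∈ Finset.range s, φ i ω) := by
        refine Measurable.mul (measurable_const.indicator hCf) ?_
        apply Finset.measurable_prod
        intro i hi
        exact (phi_meas ε).comp (hWf i (Finset.mem_range.1 hi))
      have hg : Measurable[(⨆ i ∈ {i : ℕ | s ≤ i}, MeasurableSpace.comap (W i) inferInstance)] (fun ω => ∏ i ∈ Finset.Ico s n, φ i ω) := by
        apply Finset.measurable_prod
        intro i hi
        exact (phi_meas ε).comp (measurable_iff_comap_le.2
          (le_biSup (fun i => MeasurableSpace.comap (W i) inferInstance)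
            (Finset.mem_Ico.1 hi).1))
      have hsplit : ∫⁻ ω, Set.indicator (C s) (fun _ => (1:ℝ≥0∞)) ω
            * ∏ i ∈ Finset.range s, φ i ω ∂P
          = ∫⁻ ω, Set.indicator (C s) (fun _ => (1:ℝ≥0∞)) ω
            * ∏ i ∈ Finset.range n, φ i ω ∂P := by
        calc ∫⁻ ω, Set.indicator (C s) (fun _ => (1:ℝ≥0∞)) ω
              * ∏ i ∈ Finset.range s, φ i ω ∂P
            = (∫⁻ ω, Set.indicator (C s) (fun _ => (1:ℝ≥0∞)) ω
              * ∏ i ∈ Finset.range s, φ i ω ∂P)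
              * ∫⁻ ω, ∏ i ∈ Finset.Ico s n, φ i ω ∂P := by
              rw [hφ, prod_int P W hmeas hindep hdist ε (Finset.Ico s n), mul_one]
          _ = ∫⁻ ω, (Set.indicator (C s) (fun _ => (1:ℝ≥0∞)) ω
              * ∏ i ∈ Finset.range s, φ i ω) * ∏ i ∈ Finset.Ico s n, φ i ω ∂P :=
              (lintegral_mul_eq_lintegral_mul_lintegral_of_independent_measurableSpace
                hMfle hMgle hind hf hg).symm
          _ = ∫⁻ ω, Set.indicator (C s) (fun _ => (1:ℝ≥0∞)) ω
              * ∏ i ∈ Finset.range n, φ i ω ∂P := by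
              congr 1
              funext ω
              rw [mul_assoc, Finset.prod_range_mul_prod_Ico (fun i => φ i ω) hsn]
      rw [h1, ← hsplit]
      exact lintegral_mono h2
    have hsum : ∑ s ∈ Finset.Icc t n, ENNReal.ofReal (rexp (ε ^ 2 * t / 2)) * P (C s)
        ≤ 1 := by
      calc ∑ s ∈ Finset.Icc t n, ENNReal.ofReal (rexp (ε ^ 2 * t / 2)) * P (C s)
          ≤ ∑ s ∈ Finset.Icc t n, ∫⁻ ω, Set.indicator (C s) (fun _ => (1:ℝ≥0∞)) ω
              * ∏ i ∈ Finset.range n, φ i ω ∂P := Finset.sum_le_sum hterm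
        _ = ∫⁻ ω, ∑ s ∈ Finset.Icc t n, Set.indicator (C s) (fun _ => (1:ℝ≥0∞)) ω
              * ∏ i ∈ Finset.range n, φ i ω ∂P := by
            rw [← lintegral_finset_sum]
            intro s hs
            exact (measurable_const.indicator (hCmeas s)).mul
              (Finset.measurable_prod _ (fun i _ => (phi_meas ε).comp (hmeas i)))
        _ ≤ ∫⁻ ω, ∏ i ∈ Finset.range n, φ i ω ∂P := by
            apply lintegral_mono
            intro ω
            dsimp only
            rw [← Finset.sum_mul]
            have hle1 : ∑ s ∈ Finset.Icc t n, Set.indicator (C s) (fun _ => (1:ℝ≥0∞)) ω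
                ≤ 1 := by
              by_cases hex : ∃ s ∈ Finset.Icc t n, ω ∈ C s
              · obtain ⟨s₀, hs₀, hωs₀⟩ := hex
                rw [Finset.sum_eq_single_of_mem s₀ hs₀]
                · rw [Set.indicator_of_mem hωs₀]
                · intro b hb hne
                  rw [Set.indicator_of_notMem]
                  intro hωb
                  rcases lt_or_gt_of_ne hne with h | h
                  · have hmin := Set.mem_iInter.1 (Set.mem_iInter.1
                      (Set.mem_iInter.1 hωs₀.2 b) (Finset.mem_Icc.1 hb).1) h
                    have hb1 := hωb.1
                    simp only [Set.mem_setOf_eq] at hb1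
                    exact absurd hb1 (not_le.2 hmin)
                  · have hmin := Set.mem_iInter.1 (Set.mem_iInter.1
                      (Set.mem_iInter.1 hωb.2 s₀) (Finset.mem_Icc.1 hs₀).1) h
                    have hb1 := hωs₀.1
                    simp only [Set.mem_setOf_eq] at hb1
                    exact absurd hb1 (not_le.2 hmin)
              · push_neg at hex
                rw [Finset.sum_eq_zero fun s hs => Set.indicator_of_notMem (hex s hs) _]
                exact zero_le_one
            calc (∑ s ∈ Finset.Icc t n, Set.indicator (C s) (fun _ => (1:ℝ≥0∞)) ω)
                  * ∏ i ∈ Finset.range n, φ i ω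
                ≤ 1 * ∏ i ∈ Finset.range n, φ i ω := mul_le_mul_left hle1 _
              _ = ∏ i ∈ Finset.range n, φ i ω := one_mul _
        _ = 1 := by rw [hφ]; exact prod_int P W hmeas hindep hdist ε _
    have hD : P {ω | ∃ s, t ≤ s ∧ s ≤ n ∧ ε * s ≤ S s ω} ≤ ∑ s ∈ Finset.Icc t n, P (C s) :=
      le_trans (measure_mono hsub) (measure_biUnion_finset_le _ _)
    have hmul : ENNReal.ofReal (rexp (ε ^ 2 * t / 2))
        * P {ω | ∃ s, t ≤ s ∧ s ≤ n ∧ ε * s ≤ S s ω} ≤ 1 := by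
      calc ENNReal.ofReal (rexp (ε ^ 2 * t / 2))
            * P {ω | ∃ s, t ≤ s ∧ s ≤ n ∧ ε * s ≤ S s ω}
          ≤ ENNReal.ofReal (rexp (ε ^ 2 * t / 2)) * ∑ s ∈ Finset.Icc t n, P (C s) :=
            mul_le_mul_right hD _
        _ = ∑ s ∈ Finset.Icc t n, ENNReal.ofReal (rexp (ε ^ 2 * t / 2)) * P (C s) :=
            Finset.mul_sum _ _ _
        _ ≤ 1 := hsum
    have hc0 : ENNReal.ofReal (rexp (ε ^ 2 * t / 2)) ≠ 0 := by
      simp [ENNReal.ofReal_eq_zero, not_le, Real.exp_pos]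
    calc P {ω | ∃ s, t ≤ s ∧ s ≤ n ∧ ε * s ≤ S s ω}
        = (ENNReal.ofReal (rexp (ε ^ 2 * t / 2)))⁻¹ * (ENNReal.ofReal (rexp (ε ^ 2 * t / 2))
          * P {ω | ∃ s, t ≤ s ∧ s ≤ n ∧ ε * s ≤ S s ω}) := by
          rw [← mul_assoc, ENNReal.inv_mul_cancel hc0 ENNReal.ofReal_ne_top, one_mul]
      _ ≤ (ENNReal.ofReal (rexp (ε ^ 2 * t / 2)))⁻¹ * 1 := mul_le_mul_right hmul _
      _ = ENNReal.ofReal (rexp (-(ε ^ 2 * t) / 2)) := by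
          rw [mul_one, ← ENNReal.ofReal_inv_of_pos (Real.exp_pos _), ← Real.exp_neg,
            neg_div]
  have hU : {ω | ∃ s, t ≤ s ∧ ε * s ≤ S s ω}
      = ⋃ n, {ω | ∃ s, t ≤ s ∧ s ≤ n ∧ ε * s ≤ S s ω} := by
    ext ω
    simp only [Set.mem_setOf_eq, Set.mem_iUnion]
    constructor
    · rintro ⟨s, h1, h2⟩; exact ⟨s, s, h1, le_rfl, h2⟩
    · rintro ⟨n, s, h1, _, h2⟩; exact ⟨s, h1, h2⟩
  have hdir : Directed (· ⊆ ·)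
      (fun n => {ω | ∃ s, t ≤ s ∧ s ≤ n ∧ ε * s ≤ S s ω}) := by
    apply Monotone.directed_le
    intro a b hab ω hω
    obtain ⟨s, h1, h2, h3⟩ := hω
    exact ⟨s, h1, h2.trans hab, h3⟩
  rw [hU, hdir.measure_iUnion]
  exact iSup_le key



include hmeas hdist hindep hε in
lemma tail_bound (t : ℕ) :
    P (⋃ (s : ℕ) (_ : t ≤ s) (_ : 1 ≤ s),
        {ω | ε * s ≤ |∑ i ∈ Finset.range s, W i ω|})
      ≤ 2 * ENNReal.ofReal (rexp (-(ε ^ 2 * t) / 2)) := by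
  have hmeas' : ∀ i, Measurable (fun ω => -W i ω) := fun i => (hmeas i).neg
  have hindep' : iIndepFun (fun i ω => -W i ω) P := by
    have := hindep.comp (fun _ => fun x : ℝ => -x) (fun _ => measurable_neg)
    exact this
  have hdist' : ∀ i, Measure.map (fun ω => -W i ω) P = gaussianReal 0 1 := by
    intro i
    have h1 : (fun ω => -W i ω) = (fun x : ℝ => -x) ∘ W i := rfl
    rw [h1, ← Measure.map_map measurable_neg (hmeas i), hdist i]
    have h2 : (Neg.neg : ℝ → ℝ) = ((-1 : ℝ) * ·) := by funext x; simp
    have h3 := gaussianReal_map_const_mul (μ := 0) (v := 1) (-1 : ℝ)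
    rw [h2, h3]
    norm_num
  have hsub : (⋃ (s : ℕ) (_ : t ≤ s) (_ : 1 ≤ s),
      {ω | ε * s ≤ |∑ i ∈ Finset.range s, W i ω|})
      ⊆ {ω | ∃ s, t ≤ s ∧ ε * s ≤ ∑ i ∈ Finset.range s, W i ω}
        ∪ {ω | ∃ s, t ≤ s ∧ ε * s ≤ ∑ i ∈ Finset.range s, (fun i ω => -W i ω) i ω} := by
    intro ω hω
    simp only [Set.mem_iUnion, Set.mem_setOf_eq] at hω
    obtain ⟨s, hts, _, habs⟩ := hω
    rcases abs_cases (∑ i ∈ Finset.range s, W i ω) with ⟨heq, _⟩ | ⟨heq, _⟩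
    · exact Or.inl ⟨s, hts, heq ▸ habs⟩
    · refine Or.inr ⟨s, hts, ?_⟩
      show ε * s ≤ ∑ i ∈ Finset.range s, -W i ω
      rw [Finset.sum_neg_distrib]
      rw [heq] at habs
      exact habs
  calc P (⋃ (s : ℕ) (_ : t ≤ s) (_ : 1 ≤ s),
        {ω | ε * s ≤ |∑ i ∈ Finset.range s, W i ω|})
      ≤ P ({ω | ∃ s, t ≤ s ∧ ε * s ≤ ∑ i ∈ Finset.range s, W i ω}
        ∪ {ω | ∃ s, t ≤ s ∧ ε * s ≤ ∑ i ∈ Finset.range s, (fun i ω => -W i ω) i ω}) :=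
        measure_mono hsub
    _ ≤ P {ω | ∃ s, t ≤ s ∧ ε * s ≤ ∑ i ∈ Finset.range s, W i ω}
        + P {ω | ∃ s, t ≤ s ∧ ε * s ≤ ∑ i ∈ Finset.range s, (fun i ω => -W i ω) i ω} :=
        measure_union_le _ _
    _ ≤ ENNReal.ofReal (rexp (-(ε ^ 2 * t) / 2)) + ENNReal.ofReal (rexp (-(ε ^ 2 * t) / 2)) :=
        add_le_add (maximal P W hmeas hindep hdist ε hε t)
          (maximal P (fun i ω => -W i ω) hmeas' hindep' hdist' ε hε t)
    _ = 2 * ENNReal.ofReal (rexp (-(ε ^ 2 * t) / 2)) := (two_mul _).symm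

end

theorem expectation_settling_time {Ω : Type*} [MeasurableSpace Ω] (P : Measure Ω)
    [IsProbabilityMeasure P] (W : ℕ → Ω → ℝ) (hmeas : ∀ i, Measurable (W i))
    (hindep : iIndepFun W P)
    (hdist : ∀ i, Measure.map (W i) P = gaussianReal 0 1)
    (ε : ℝ) (hε : 0 < ε) :
    ∫⁻ ω, ((sInf {t : ℕ | 1 ≤ t ∧ ∀ s : ℕ, t ≤ s →
        |(∑ i ∈ Finset.range s, W i ω) / s| < ε} : ℕ) : ℝ≥0∞) ∂P ≤
      ENNReal.ofReal (1 + 9 / ε ^ 2) := by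
  classical
  set E : ℕ → Set Ω := fun t => ⋃ (s : ℕ) (_ : t ≤ s) (_ : 1 ≤ s),
    {ω | ε * s ≤ |∑ i ∈ Finset.range s, W i ω|} with hE
  have hEmeas : ∀ t, MeasurableSet (E t) := by
    intro t
    exact MeasurableSet.iUnion fun s => MeasurableSet.iUnion fun _ =>
      MeasurableSet.iUnion fun _ => measurableSet_le measurable_const
        ((Finset.measurable_sum _ fun i _ => hmeas i).abs)
  have hpoint : ∀ ω, ((sInf {t : ℕ | 1 ≤ t ∧ ∀ s : ℕ, t ≤ s →
      |(∑ i ∈ Finset.range s, W i ω) / s| < ε} : ℕ) : ℝ≥0∞)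
      ≤ 1 + ∑' (t : ℕ), Set.indicator (E (t + 1)) (fun _ => 1) ω := by
    intro ω
    set A := {t : ℕ | 1 ≤ t ∧ ∀ s : ℕ, t ≤ s →
      |(∑ i ∈ Finset.range s, W i ω) / s| < ε} with hA
    by_cases h0 : sInf A = 0
    · rw [h0]
      simp
    · have h1 : 1 ≤ sInf A := Nat.one_le_iff_ne_zero.2 h0
      have hmem : ∀ t, 1 ≤ t → t < sInf A → ω ∈ E t := by
        intro t h1t hlt
        have hnot : t ∉ A := Nat.notMem_of_lt_sInf hlt
        simp only [hA, Set.mem_setOf_eq, not_and, not_forall, not_lt] at hnot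
        obtain ⟨s, hts, hge⟩ := hnot h1t
        have hs1 : 1 ≤ s := le_trans h1t hts
        have hspos : (0:ℝ) < s := by exact_mod_cast Nat.lt_of_lt_of_le Nat.zero_lt_one hs1
        have habs : ε * s ≤ |∑ i ∈ Finset.range s, W i ω| := by
          rw [abs_div, abs_of_pos hspos] at hge
          exact (le_div_iff₀ hspos).1 hge
        exact Set.mem_iUnion.2 ⟨s, Set.mem_iUnion.2 ⟨hts, Set.mem_iUnion.2 ⟨hs1, habs⟩⟩⟩
      have hones : ∀ k ∈ Finset.range (sInf A - 1),
          Set.indicator (E (k + 1)) (fun _ => (1:ℝ≥0∞)) ω = 1 := by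
        intro k hk
        have hk' := Finset.mem_range.1 hk
        have hlt : k + 1 < sInf A := by omega
        rw [Set.indicator_of_mem (hmem (k + 1) (Nat.succ_le_succ (Nat.zero_le k)) hlt)]
      calc ((sInf A : ℕ) : ℝ≥0∞) = 1 + (((sInf A - 1 : ℕ)) : ℝ≥0∞) := by
            rw [← Nat.cast_one, ← Nat.cast_add]
            congr 1
            omega
        _ ≤ 1 + ∑' (t : ℕ), Set.indicator (E (t + 1)) (fun _ => 1) ω := by
            refine add_le_add_right ?_ 1
            calc (((sInf A - 1 : ℕ)) : ℝ≥0∞)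
                = ∑ k ∈ Finset.range (sInf A - 1),
                  Set.indicator (E (k + 1)) (fun _ => (1:ℝ≥0∞)) ω := by
                  rw [Finset.sum_congr rfl hones]
                  simp
              _ ≤ ∑' (t : ℕ), Set.indicator (E (t + 1)) (fun _ => 1) ω :=
                  ENNReal.sum_le_tsum _
  have hineq1 : ∫⁻ ω, ((sInf {t : ℕ | 1 ≤ t ∧ ∀ s : ℕ, t ≤ s →
      |(∑ i ∈ Finset.range s, W i ω) / s| < ε} : ℕ) : ℝ≥0∞) ∂P
      ≤ 1 + ∑' (t : ℕ), P (E (t + 1)) := by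
    calc ∫⁻ ω, ((sInf {t : ℕ | 1 ≤ t ∧ ∀ s : ℕ, t ≤ s →
          |(∑ i ∈ Finset.range s, W i ω) / s| < ε} : ℕ) : ℝ≥0∞) ∂P
        ≤ ∫⁻ ω, (1 + ∑' (t : ℕ), Set.indicator (E (t + 1)) (fun _ => 1) ω) ∂P :=
          lintegral_mono hpoint
      _ = ∫⁻ _, (1:ℝ≥0∞) ∂P
          + ∫⁻ ω, ∑' (t : ℕ), Set.indicator (E (t + 1)) (fun _ => 1) ω ∂P :=
          lintegral_add_left measurable_const _
      _ = 1 + ∑' (t : ℕ), P (E (t + 1)) := by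
          rw [lintegral_const, measure_univ, one_mul,
            lintegral_tsum (fun t => (measurable_const.indicator (hEmeas (t + 1))).aemeasurable)]
          congr 1
          refine tsum_congr fun t => ?_
          rw [lintegral_indicator_const (hEmeas (t + 1)), one_mul]
  have hgeo : ∑' (t : ℕ), P (E (t + 1)) ≤ ENNReal.ofReal (9 / ε ^ 2) := by
    set r : ℝ := rexp (-(ε ^ 2) / 2) with hr
    have hε2 : (0:ℝ) < ε ^ 2 := by positivity
    have hrpos : 0 < r := Real.exp_pos _
    have hrlt : r < 1 := Real.exp_lt_one_iff.2 (by linarith)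
    have hterm : ∀ t : ℕ, P (E (t + 1)) ≤ 2 * ENNReal.ofReal r ^ (t + 1) := by
      intro t
      have h1 := tail_bound P W hmeas hindep hdist ε hε (t + 1)
      refine le_trans h1 ?_
      have h2 : rexp (-(ε ^ 2 * (t + 1 : ℕ)) / 2) = r ^ (t + 1) := by
        rw [hr, ← Real.exp_nat_mul]
        congr 1
        push_cast
        ring
      rw [h2, ENNReal.ofReal_pow hrpos.le]
    calc ∑' (t : ℕ), P (E (t + 1))
        ≤ ∑' (t : ℕ), 2 * ENNReal.ofReal r ^ (t + 1) := ENNReal.tsum_le_tsum hterm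
      _ = 2 * (ENNReal.ofReal r * ∑' (t : ℕ), ENNReal.ofReal r ^ t) := by
          rw [ENNReal.tsum_mul_left]
          congr 1
          rw [← ENNReal.tsum_mul_left]
          refine tsum_congr fun t => ?_
          rw [pow_succ']
      _ = 2 * (ENNReal.ofReal r * (1 - ENNReal.ofReal r)⁻¹) := by
          rw [ENNReal.tsum_geometric]
      _ ≤ ENNReal.ofReal (9 / ε ^ 2) := by
          have hsub1 : (1 : ℝ≥0∞) - ENNReal.ofReal r = ENNReal.ofReal (1 - r) := by
            rw [ENNReal.ofReal_sub _ hrpos.le, ENNReal.ofReal_one]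
          rw [hsub1, ← ENNReal.ofReal_inv_of_pos (by linarith), ← ENNReal.ofReal_mul hrpos.le,
            show (2:ℝ≥0∞) = ENNReal.ofReal 2 by norm_num, ← ENNReal.ofReal_mul (by norm_num)]
          apply ENNReal.ofReal_le_ofReal
          set a : ℝ := ε ^ 2 / 2 with ha
          have hapos : 0 < a := by positivity
          have hr_eq : r = rexp (-a) := by rw [hr, ha]; congr 1; ring
          have hkey : a * r ≤ 1 - r := by
            have h1 := Real.add_one_le_exp a
            have h2 : (a + 1) * r ≤ rexp a * r :=
              mul_le_mul_of_nonneg_right h1 hrpos.le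
            have h3 : rexp a * r = 1 := by
              rw [hr_eq, ← Real.exp_add]
              simp
            nlinarith
          have harp : 0 < a * r := by positivity
          have hinv : (1 - r)⁻¹ ≤ (a * r)⁻¹ := by
            apply inv_anti₀ harp hkey
          have h4 : r * (1 - r)⁻¹ ≤ r * (a * r)⁻¹ :=
            mul_le_mul_of_nonneg_left hinv hrpos.le
          have h5 : r * (a * r)⁻¹ = a⁻¹ := by
            field_simp
          have h6 : 2 * a⁻¹ = 4 / ε ^ 2 := by
            rw [ha]
            field_simp
            ring
          have h7 : (4:ℝ) / ε ^ 2 ≤ 9 / ε ^ 2 := by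
            gcongr
            norm_num
          nlinarith [h4, h5, h6, h7]
  calc ∫⁻ ω, ((sInf {t : ℕ | 1 ≤ t ∧ ∀ s : ℕ, t ≤ s →
        |(∑ i ∈ Finset.range s, W i ω) / s| < ε} : ℕ) : ℝ≥0∞) ∂P
      ≤ 1 + ∑' (t : ℕ), P (E (t + 1)) := hineq1
    _ ≤ 1 + ENNReal.ofReal (9 / ε ^ 2) := add_le_add_right hgeo 1
    _ = ENNReal.ofReal (1 + 9 / ε ^ 2) := by
        rw [ENNReal.ofReal_add (by norm_num) (by positivity), ENNReal.ofReal_one]
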